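/- If μ is an 𝒮-block measure on F_S with blocks S_1,…,S_ℓ, then almost surely the coalescence classes of the associated coupled chains are exactly the blocks S_1,…,S_ℓ. -/

import Mathlib

open Finset MeasureTheory

/-- `comps f t = f_t ∘ ⋯ ∘ f_1` (indexed from `0`). -/
def comps {S : Type*} (f : ℕ → S → S) : ℕ → S → S
  | 0 => id
  | t + 1 => f t ∘ comps f t

/-- States `i` and `j` coalesce under the sequence of functions `f`. -/
def Coalesces {S : Type*} (f : ℕ → S → S) (i j : S) : Prop :=
  ∃ t : ℕ, comps f t i = comps f t j

/-- `μ` is a block measure with blocks the fibres of the surjection `c : S → Fin ℓ`: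
(a) every function in the support of `μ` permutes the blocks, and
(b) the number of coalescence classes is a.s. `ℓ`. -/
def IsBlockMeasure {S : Type*} {Ω : Type*} [MeasurableSpace Ω] (Pr : Measure Ω)
    (F : ℕ → Ω → S → S) (μ : (S → S) → ℝ) {ℓ : ℕ} (c : S → Fin ℓ) : Prop :=
  Function.Surjective c ∧
  (∀ f : S → S, μ f ≠ 0 → ∃ π : Equiv.Perm (Fin ℓ), ∀ i, c (f i) = π (c i)) ∧
  (∀ᵐ ω ∂Pr, ∃ g : S → Fin ℓ, Function.Surjective g ∧
      ∀ i j, Coalesces (fun n => F n ω) i j ↔ g i = g j)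

/-- if `μ` is an `𝒮`-block measure with blocks the fibres of `c`, then almost
surely the coalescence classes of the coupled chains are exactly the blocks. -/
theorem blockMeasure_classes_are_blocks {S : Type*} [Fintype S] [DecidableEq S] [Nonempty S]
    {Ω : Type*} [MeasurableSpace Ω] (Pr : Measure Ω) [IsProbabilityMeasure Pr]
    (μ : (S → S) → ℝ) (hμnn : ∀ g, 0 ≤ μ g) (hμsum : ∑ g, μ g = 1)
    (F : ℕ → Ω → S → S)
    (hiid : ∀ (T : Finset ℕ) (g : ℕ → S → S),
      Pr {ω | ∀ t ∈ T, F t ω = g t} = ∏ t ∈ T, ENNReal.ofReal (μ (g t)))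
    {ℓ : ℕ} (c : S → Fin ℓ) (hblock : IsBlockMeasure Pr F μ c) :
    ∀ᵐ ω ∂Pr, ∀ i j, Coalesces (fun n => F n ω) i j ↔ c i = c j := by
  obtain ⟨hcsurj, hperm, hg⟩ := hblock
  -- almost surely, every `F t ω` is in the support of `μ`
  have hsupp : ∀ᵐ ω ∂Pr, ∀ t, μ (F t ω) ≠ 0 := by
    rw [MeasureTheory.ae_all_iff]
    intro t
    rw [ae_iff]
    have hsub : {ω | ¬ μ (F t ω) ≠ 0} ⊆
        ⋃ g : S → S, {ω | F t ω = g ∧ μ g = 0} := by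
      intro ω hω
      simp only [Set.mem_setOf_eq, not_not] at hω
      exact Set.mem_iUnion.2 ⟨F t ω, rfl, hω⟩
    refine le_antisymm ((measure_mono hsub).trans ((measure_iUnion_le _).trans ?_))
      zero_le
    have hzero : ∀ g : S → S, Pr {ω | F t ω = g ∧ μ g = 0} = 0 := by
      intro g
      by_cases h0 : μ g = 0
      · have hsub2 : {ω | F t ω = g ∧ μ g = 0} ⊆
            {ω | ∀ s ∈ ({t} : Finset ℕ), F s ω = (fun _ => g) s} := by
          intro ω hω s hs
          rw [Finset.mem_singleton] at hs
          subst hs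
          exact hω.1
        refine le_antisymm ((measure_mono hsub2).trans_eq ?_) zero_le
        rw [hiid ({t} : Finset ℕ) (fun _ => g), Finset.prod_singleton, h0,
          ENNReal.ofReal_zero]
      · have : {ω | F t ω = g ∧ μ g = 0} = ∅ := by
          ext ω; simp [h0]
        simp [this]
    simp [hzero]
  -- compositions permute the blocks
  have hcomp : ∀ (f : ℕ → S → S), (∀ t, μ (f t) ≠ 0) →
      ∀ t, ∃ σ : Equiv.Perm (Fin ℓ), ∀ i, c (comps f t i) = σ (c i) := by
    intro f hf t
    induction t with
    | zero => exact ⟨1, fun i => rfl⟩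
    | succ t ih =>
      obtain ⟨σ, hσ⟩ := ih
      obtain ⟨π, hπ⟩ := hperm (f t) (hf t)
      exact ⟨σ.trans π, fun i => by
        simp [comps, Function.comp, hπ, hσ, Equiv.trans_apply]⟩
  filter_upwards [hsupp, hg] with ω hs hgω
  obtain ⟨g, hgsurj, hgco⟩ := hgω
  have fwd : ∀ i j, Coalesces (fun n => F n ω) i j → c i = c j := by
    intro i j ⟨t, ht⟩
    obtain ⟨σ, hσ⟩ := hcomp _ hs t
    have := congrArg c ht
    rw [hσ i, hσ j] at this
    exact σ.injective this
  intro i j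
  refine ⟨fwd i j, fun h => ?_⟩
  have hcg : ∀ i j, g i = g j → c i = c j := fun i j h => fwd i j ((hgco i j).mpr h)
  obtain ⟨s, hs'⟩ := hgsurj.hasRightInverse
  have hfac : ∀ i, c i = (c ∘ s) (g i) := fun i => hcg i (s (g i)) (hs' (g i)).symm
  have hsurjh : Function.Surjective (c ∘ s) := by
    intro k
    obtain ⟨i, hi⟩ := hcsurj k
    exact ⟨g i, by rw [← hfac i, hi]⟩
  have hinj : Function.Injective (c ∘ s) := Finite.injective_iff_surjective.mpr hsurjh
  exact (hgco i j).mpr (hinj (by rw [← hfac, ← hfac, h]))
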